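/- If χ = (χ_st, χ_tr) : M_1 → M_2 is an in-splitting of multi-agent systems, then the induced map ĥ on tree nodes, defined by ĥ(ε) = ε and ĥ(x·i) = ĥ(x)·χ_st(i), is a tree isomorphism between the unfoldings t_{M_1} and t_{M_2}, and satisfies t_{M_2}(ĥ(x)) = χ_st(t_{M_1}(x)) for all nodes x. -/

import Mathlib

private lemma chain_prefix {α} {r : α → α → Prop} {a : α} :
    ∀ l1 l2 : List α, List.Chain r a (l1 ++ l2) → List.Chain r a l1
  | [], _, _ => List.Chain.nil
  | _ :: t, l2, h => by
    cases h with
    | cons_cons hab h => exact List.Chain.cons hab (chain_prefix t l2 h)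

/-- An in-splitting `χ : M₁ → M₂` of multi-agent systems induces, via
`x ↦ List.map χ x`, a tree isomorphism between the unfoldings (a bijection between node sets
preserving the child relation) satisfying `t_{M₂}(ĥ(x)) = χ(t_{M₁}(x))` for all nodes. -/
theorem stmt9 {Q1 Q2 P : Type*} (δ1 : Q1 → Q1 → Prop) (δ2 : Q2 → Q2 → Prop)
    (q01 : Q1) (q02 : Q2) (π1 : Q1 → Set P) (π2 : Q2 → Set P)
    (χ : Q1 → Q2) (hsurj : Function.Surjective χ)
    (htrans : ∀ q r, δ1 q r → δ2 (χ q) (χ r))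
    (hlab : ∀ q, π2 (χ q) = π1 q)
    (hsucc : ∀ q, Set.BijOn χ {r | δ1 q r} {r | δ2 (χ q) r})
    (hinit : χ q01 = q02) :
    Set.BijOn (List.map χ) {x | List.Chain δ1 q01 x} {x | List.Chain δ2 q02 x} ∧
    (∀ x y : List Q1, List.Chain δ1 q01 x → List.Chain δ1 q01 y →
      ((∃ i, y = x ++ [i]) ↔ (∃ j, List.map χ y = List.map χ x ++ [j]))) ∧
    (∀ x : List Q1, List.Chain δ1 q01 x →
      (q02 :: List.map χ x).getLast (List.cons_ne_nil _ _) =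
        χ ((q01 :: x).getLast (List.cons_ne_nil _ _))) := by
  subst hinit
  -- injectivity (generalized over starting state)
  have inj : ∀ (x : List Q1) (q : Q1) (y : List Q1), List.Chain δ1 q x →
      List.Chain δ1 q y → List.map χ x = List.map χ y → x = y := by
    intro x
    induction x with
    | nil => intro q y _ _ h; cases y <;> simp_all
    | cons a t ih =>
      intro q y hx hy h
      cases y with
      | nil => simp at h
      | cons b s =>
        cases hx with
        | cons_cons hqa hx =>
        cases hy with
        | cons_cons hqb hy =>
        simp only [List.map_cons, List.cons.injEq] at h
        have hab : a = b := (hsucc q).injOn hqa hqb h.1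
        subst hab
        exact congrArg _ (ih a s hx hy h.2)
  -- surjectivity (generalized over starting state)
  have surj : ∀ (z : List Q2) (q : Q1), List.Chain δ2 (χ q) z →
      ∃ x, List.Chain δ1 q x ∧ List.map χ x = z := by
    intro z
    induction z with
    | nil => exact fun q _ => ⟨[], List.Chain.nil, rfl⟩
    | cons b s ih =>
      intro q hz
      cases hz with
      | cons_cons hqb hz =>
        obtain ⟨r, hr, hrb⟩ := (hsucc q).surjOn hqb
        subst hrb
        obtain ⟨x, hx, hmx⟩ := ih r hz
        exact ⟨r :: x, List.Chain.cons hr hx, by simp [hmx]⟩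
  have maps : ∀ (x : List Q1) (q : Q1), List.Chain δ1 q x →
      List.Chain δ2 (χ q) (List.map χ x) := by
    intro x
    induction x with
    | nil => intro q _; exact List.Chain.nil
    | cons a t ih =>
      intro q hx
      cases hx with
      | cons_cons hqa hx => exact List.Chain.cons (htrans _ _ hqa) (ih a hx)
  refine ⟨⟨fun x hx => maps x q01 hx, fun x hx y hy h => inj x q01 y hx hy h,
      fun z hz => ?_⟩, fun x y hx hy => ?_, fun x hx => ?_⟩
  · obtain ⟨x, hx, hmx⟩ := surj z q01 hz
    exact ⟨x, hx, hmx⟩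
  · constructor
    · rintro ⟨i, rfl⟩; exact ⟨χ i, by simp⟩
    · rintro ⟨j, hj⟩
      have hyne : y ≠ [] := by rintro rfl; simp at hj
      have hdec : y = y.dropLast ++ [y.getLast hyne] := (List.dropLast_append_getLast hyne).symm
      refine ⟨y.getLast hyne, ?_⟩
      have hj' : List.map χ y.dropLast ++ [χ (y.getLast hyne)] = List.map χ x ++ [j] := by
        rw [show [χ (y.getLast hyne)] = List.map χ [y.getLast hyne] from rfl,
          ← List.map_append, ← hdec]; exact hj
      have hlast : List.map χ y.dropLast = List.map χ x :=
        (List.append_inj' hj' rfl).1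
      have hchain : List.Chain δ1 q01 y.dropLast :=
        chain_prefix _ _ (hdec ▸ hy)
      conv_lhs => rw [hdec]
      rw [inj y.dropLast q01 x hchain hx hlast]
  · exact List.getLast_map (f := χ) (l := q01 :: x) (by simp)
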